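/- Let A ∈ M_{m×n}(ℝ), l, u ∈ ℝⁿ, and w ∈ ℝᵐ with wᵀ·A = (c₁,…,cₙ). Define w₂ ∈ ℝⁿ by (w₂)ᵢ = -cᵢ if cᵢ < 0 and 0 otherwise, and w₃ ∈ ℝⁿ by (w₃)ᵢ = cᵢ if cᵢ > 0 and 0 otherwise. Then for every V ∈ ℝⁿ, wᵀ·(A·V) + Σᵢ (w₂)ᵢ·(Vᵢ − lᵢ) + Σᵢ (w₃)ᵢ·(uᵢ − Vᵢ) = Σ_{i: cᵢ>0} cᵢ·uᵢ + Σ_{i: cᵢ<0} cᵢ·lᵢ, a constant independent of V. In particular, if Σ_{i: cᵢ>0} cᵢ·uᵢ + Σ_{i: cᵢ<0} cᵢ·lᵢ < 0, the combination equals a negative constant. -/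
import Mathlib


open scoped Matrix

/-- Reduction of Marabou proof vectors to the Alethe `la_generic` form:
the weighted combination of equality rows, lower-bound atoms, and
upper-bound atoms is a constant independent of V, namely
Σ_{cᵢ>0} cᵢuᵢ + Σ_{cᵢ<0} cᵢlᵢ; in particular it is negative whenever that
constant is. -/
theorem marabou_to_alethe_reduction {m n : ℕ}
    (A : Matrix (Fin m) (Fin n) ℝ) (l u : Fin n → ℝ) (w : Fin m → ℝ)
    (c : Fin n → ℝ) (hc : c = Matrix.vecMul w A)
    (w₂ w₃ : Fin n → ℝ)
    (hw₂ : ∀ i, w₂ i = if c i < 0 then -c i else 0)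
    (hw₃ : ∀ i, w₃ i = if 0 < c i then c i else 0) :
    (∀ V : Fin n → ℝ,
      w ⬝ᵥ A.mulVec V + (∑ i, w₂ i * (V i - l i)) + (∑ i, w₃ i * (u i - V i))
        = ∑ i, (if 0 < c i then c i * u i else if c i < 0 then c i * l i else 0)) ∧
    ((∑ i, (if 0 < c i then c i * u i else if c i < 0 then c i * l i else 0)) < 0 →
      ∀ V : Fin n → ℝ,
        w ⬝ᵥ A.mulVec V + (∑ i, w₂ i * (V i - l i)) + (∑ i, w₃ i * (u i - V i)) < 0) := by
  have key : ∀ V : Fin n → ℝ,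
      w ⬝ᵥ A.mulVec V + (∑ i, w₂ i * (V i - l i)) + (∑ i, w₃ i * (u i - V i))
        = ∑ i, (if 0 < c i then c i * u i else if c i < 0 then c i * l i else 0) := by
    intro V
    have h1 : w ⬝ᵥ A.mulVec V = ∑ i, c i * V i := by
      rw [hc, Matrix.dotProduct_mulVec]
      rfl
    rw [h1, ← Finset.sum_add_distrib, ← Finset.sum_add_distrib]
    apply Finset.sum_congr rfl
    intro i _
    rw [hw₂ i, hw₃ i]
    rcases lt_trichotomy (c i) 0 with h | h | h
    · simp [h, not_lt.mpr h.le, asymm h]; ring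
    · simp [h]
    · simp [h, asymm h, not_lt.mpr h.le]; ring
  exact ⟨key, fun hneg V => (key V) ▸ hneg⟩
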